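/- arXiv:2409.12710 — 3 statements merged into one kernel-verified Lean document; each statement's English description precedes it below -/
import Mathlib

section
/- Let Y_1, …, Y_N be independent and identically distributed exponential random variables with rate parameter μ > 0. Then for every t ≥ 0, P(Σ_{j=1}^N Y_j ≤ t) ≤ (e·t·μ/N)^N. -/
open MeasureTheory ProbabilityTheory Set

private lemma integral_exp_neg_mul_Ioi' {b : ℝ} (hb : 0 < b) :
    ∫ x in Ioi (0:ℝ), Real.exp (-(b * x)) = 1 / b := by
  have hderiv : ∀ x ∈ Ici (0:ℝ), HasDerivAt (fun y => -Real.exp (-(b * y)) / b)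
      (Real.exp (-(b * x))) x := by
    intro x _
    have h := (((hasDerivAt_id x).const_mul b).neg.exp).neg.div_const b
    refine h.congr_deriv ?_
    simp only [Pi.neg_apply, id]
    field_simp
  have hint : IntegrableOn (fun x => Real.exp (-(b * x))) (Ioi (0:ℝ)) := by
    simpa [neg_mul] using exp_neg_integrableOn_Ioi 0 hb
  have htend : Filter.Tendsto (fun y => -Real.exp (-(b * y)) / b) Filter.atTop (nhds 0) := by
    have h1 : Filter.Tendsto (fun y : ℝ => b * y) Filter.atTop Filter.atTop :=
      Filter.Tendsto.const_mul_atTop hb Filter.tendsto_id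
    have h2 : Filter.Tendsto (fun y : ℝ => Real.exp (-(b * y))) Filter.atTop (nhds 0) := by
      have := Real.tendsto_exp_neg_atTop_nhds_zero.comp h1
      simpa [Function.comp_def] using this
    simpa using (h2.neg).div_const b
  rw [integral_Ioi_of_hasDerivAt_of_tendsto' hderiv hint htend]
  simp
  ring

private lemma gammaPDFReal_one_eq (r x : ℝ) :
    gammaPDFReal 1 r x = if 0 ≤ x then r * Real.exp (-(r * x)) else 0 := by
  simp [gammaPDFReal, Real.Gamma_one, Real.rpow_one, sub_self, Real.rpow_zero]

private lemma integrand_eq {r v : ℝ} (hr : 0 < r) :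
    (fun x => gammaPDFReal 1 r x * Real.exp (v * x))
      = (Ici (0:ℝ)).indicator (fun x => r * Real.exp (-((r - v) * x))) := by
  funext x
  simp only [Set.indicator_apply, mem_Ici, gammaPDFReal_one_eq]
  by_cases hx : 0 ≤ x
  · rw [if_pos hx, if_pos hx, mul_assoc, ← Real.exp_add]
    ring_nf
  · rw [if_neg hx, if_neg hx, zero_mul]

private lemma expMeasure_eq (r : ℝ) :
    expMeasure r = MeasureTheory.volume.withDensity
      (fun x => ((gammaPDFReal 1 r x).toNNReal : ENNReal)) := rfl

private lemma integral_exp_expMeasure {r v : ℝ} (hr : 0 < r) (hv : v < r) :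
    ∫ x, Real.exp (v * x) ∂(expMeasure r) = r / (r - v) := by
  have hb : 0 < r - v := sub_pos.2 hv
  rw [expMeasure_eq, integral_withDensity_eq_integral_smul
    ((measurable_gammaPDFReal 1 r).real_toNNReal)]
  have heq : (fun x => (gammaPDFReal 1 r x).toNNReal • Real.exp (v * x))
      = (Ici (0:ℝ)).indicator (fun x => r * Real.exp (-((r - v) * x))) := by
    rw [← integrand_eq hr]
    funext x
    rw [NNReal.smul_def, Real.coe_toNNReal _ (gammaPDFReal_nonneg one_pos hr x), smul_eq_mul]
  rw [heq, integral_indicator measurableSet_Ici, integral_Ici_eq_integral_Ioi,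
    MeasureTheory.integral_const_mul, integral_exp_neg_mul_Ioi' hb]
  field_simp

private lemma integrable_exp_expMeasure {r v : ℝ} (hr : 0 < r) (hv : v < r) :
    Integrable (fun x => Real.exp (v * x)) (expMeasure r) := by
  have hb : 0 < r - v := sub_pos.2 hv
  have h1 : IntegrableOn (fun x => Real.exp (-((r - v) * x))) (Ioi (0:ℝ)) := by
    have hx : ∀ x : ℝ, -((r - v) * x) = -(r - v) * x := fun x => (neg_mul _ _).symm
    simp_rw [hx]
    exact exp_neg_integrableOn_Ioi 0 hb
  have h2 : IntegrableOn (fun x => r * Real.exp (-((r - v) * x))) (Ici (0:ℝ)) := by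
    rw [integrableOn_Ici_iff_integrableOn_Ioi]
    exact h1.const_mul r
  have h3 : Integrable ((Ici (0:ℝ)).indicator fun x => r * Real.exp (-((r - v) * x)))
      (volume : Measure ℝ) := (integrable_indicator_iff measurableSet_Ici).2 h2
  have hmeas : Measurable (gammaPDF 1 r) := (measurable_gammaPDFReal 1 r).ennreal_ofReal
  rw [show expMeasure r = (volume : Measure ℝ).withDensity (gammaPDF 1 r) from rfl,
    integrable_withDensity_iff hmeas (Filter.Eventually.of_forall fun x => ENNReal.ofReal_lt_top)]
  have heq : (fun x => Real.exp (v * x) * (gammaPDF 1 r x).toReal)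
      = (Ici (0:ℝ)).indicator fun x => r * Real.exp (-((r - v) * x)) := by
    rw [← integrand_eq hr]
    funext x
    rw [gammaPDF_eq, ← gammaPDFReal, ENNReal.toReal_ofReal (gammaPDFReal_nonneg one_pos hr x),
      mul_comm]
  rw [heq]
  exact h3

private lemma mgf_of_map {Ω : Type*} [MeasurableSpace Ω] {P : Measure Ω} {Y : Ω → ℝ}
    (hY : Measurable Y) {r v : ℝ} (hmap : P.map Y = expMeasure r) (hr : 0 < r) (hv : v < r) :
    mgf Y P v = r / (r - v) := by
  have hsm : AEStronglyMeasurable (fun x => Real.exp (v * x)) (P.map Y) :=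
    ((measurable_id.const_mul v).exp).aestronglyMeasurable
  rw [mgf, ← integral_map hY.aemeasurable hsm, hmap, integral_exp_expMeasure hr hv]

private lemma integrable_exp_of_map {Ω : Type*} [MeasurableSpace Ω] {P : Measure Ω} {Y : Ω → ℝ}
    (hY : Measurable Y) {r v : ℝ} (hmap : P.map Y = expMeasure r) (hr : 0 < r) (hv : v < r) :
    Integrable (fun ω => Real.exp (v * Y ω)) P := by
  have hsm : AEStronglyMeasurable (fun x => Real.exp (v * x)) (P.map Y) :=
    ((measurable_id.const_mul v).exp).aestronglyMeasurable
  have := (integrable_map_measure hsm hY.aemeasurable).mp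
    (by rw [hmap]; exact integrable_exp_expMeasure hr hv)
  exact this

private lemma exp_sum_small_ball_pos
    {Ω : Type*} [MeasurableSpace Ω] (P : Measure Ω) [IsProbabilityMeasure P]
    (N : ℕ) (hN : 0 < N) (r : ℝ) (hr : 0 < r)
    (Y : Fin N → Ω → ℝ)
    (hmeas : ∀ j, Measurable (Y j))
    (hindep : iIndepFun Y P)
    (hdist : ∀ j, P.map (Y j) = expMeasure r)
    (t : ℝ) (ht : 0 < t) :
    (P {ω | ∑ j, Y j ω ≤ t}).toReal ≤ (Real.exp 1 * t * r / N) ^ N := by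
  have hNpos : (0:ℝ) < N := Nat.cast_pos.2 hN
  by_cases hcase : (N:ℝ) ≤ t * r
  · have h1 : (P {ω | ∑ j, Y j ω ≤ t}).toReal ≤ 1 := by
      have := ENNReal.toReal_mono ENNReal.one_ne_top (prob_le_one (μ := P) (s := {ω | ∑ j, Y j ω ≤ t}))
      simpa using this
    refine h1.trans (one_le_pow₀ ?_)
    have he : (1:ℝ) ≤ Real.exp 1 := by
      nlinarith [Real.add_one_le_exp (1:ℝ)]
    calc (1:ℝ) ≤ t * r / N := (one_le_div hNpos).2 hcase
      _ ≤ Real.exp 1 * t * r / N := by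
        gcongr
        nlinarith [mul_pos ht hr]
  · push_neg at hcase
    set s : ℝ := N / t - r with hs
    have hspos : 0 < s := by
      rw [hs, sub_pos, lt_div_iff₀ ht]
      nlinarith
    have hvlt : -s < r := by nlinarith
    have h_int : ∀ j, Integrable (fun ω => Real.exp ((-s) * Y j ω)) P :=
      fun j => integrable_exp_of_map (hmeas j) (hdist j) hr hvlt
    have h_int_sum :
        Integrable (fun ω => Real.exp ((-s) * (∑ j, Y j) ω)) P :=
      hindep.integrable_exp_mul_sum hmeas (fun j _ => h_int j)
    have hch := measure_le_le_exp_mul_mgf (μ := P) (X := ∑ j, Y j) t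
      (neg_nonpos.2 hspos.le) h_int_sum
    have hset : {ω | (∑ j, Y j) ω ≤ t} = {ω | ∑ j, Y j ω ≤ t} := by
      ext ω; simp
    rw [hset] at hch
    have hmgf : mgf (∑ j, Y j) P (-s) = (t * r / N) ^ N := by
      rw [hindep.mgf_sum hmeas Finset.univ]
      have hone : ∀ j : Fin N, mgf (Y j) P (-s) = t * r / N := by
        intro j
        rw [mgf_of_map (hmeas j) (hdist j) hr hvlt, hs]
        have hrw : r - -((N:ℝ) / t - r) = (N:ℝ) / t := by ring
        rw [hrw, div_div_eq_mul_div]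
        ring
      rw [Finset.prod_congr rfl (fun j _ => hone j), Finset.prod_const,
        Finset.card_univ, Fintype.card_fin]
    have hst : -(-s) * t = (N:ℝ) - r * t := by
      rw [hs]; field_simp
    rw [hmgf, hst] at hch
    refine hch.trans ?_
    have hexp : Real.exp ((N:ℝ) - r * t) ≤ Real.exp (N:ℝ) :=
      Real.exp_le_exp.2 (by nlinarith)
    have hexpN : Real.exp (N:ℝ) = (Real.exp 1) ^ N := by
      rw [← Real.exp_nat_mul]; norm_num
    calc Real.exp ((N:ℝ) - r * t) * (t * r / N) ^ N
        ≤ Real.exp (N:ℝ) * (t * r / N) ^ N := by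
          apply mul_le_mul_of_nonneg_right hexp (by positivity)
      _ = (Real.exp 1 * t * r / N) ^ N := by
          rw [hexpN, ← mul_pow]
          congr 1
          ring

/-- **Small-ball bound for sums of i.i.d. exponentials**: if `Y₁, …, Y_N` are i.i.d.
exponential random variables with rate `μ > 0`, then for every `t ≥ 0`,
`P(∑ Yⱼ ≤ t) ≤ (e t μ / N)^N`. -/
theorem exp_sum_small_ball
    {Ω : Type*} [MeasurableSpace Ω] (P : Measure Ω) [IsProbabilityMeasure P]
    (N : ℕ) (hN : 0 < N) (r : ℝ) (hr : 0 < r)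
    (Y : Fin N → Ω → ℝ)
    (hmeas : ∀ j, Measurable (Y j))
    (hindep : iIndepFun Y P)
    (hdist : ∀ j, P.map (Y j) = expMeasure r)
    (t : ℝ) (ht : 0 ≤ t) :
    (P {ω | ∑ j, Y j ω ≤ t}).toReal ≤ (Real.exp 1 * t * r / N) ^ N := by
  rcases ht.eq_or_lt with h0 | hpos
  · subst h0
    have key : ∀ ε ∈ Ioi (0:ℝ),
        (P {ω | ∑ j, Y j ω ≤ (0:ℝ)}).toReal ≤ (Real.exp 1 * ε * r / N) ^ N := by
      intro ε hε
      refine le_trans (ENNReal.toReal_mono (measure_ne_top _ _)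
        (measure_mono fun ω hω => le_trans hω (le_of_lt (mem_Ioi.mp hε)))) ?_
      exact exp_sum_small_ball_pos P N hN r hr Y hmeas hindep hdist ε hε
    have hc : Continuous fun ε : ℝ => (Real.exp 1 * ε * r / (N:ℝ)) ^ N := by
      fun_prop
    have htend : Filter.Tendsto (fun ε : ℝ => (Real.exp 1 * ε * r / (N:ℝ)) ^ N)
        (nhdsWithin 0 (Ioi 0)) (nhds ((Real.exp 1 * 0 * r / (N:ℝ)) ^ N)) :=
      (hc.tendsto 0).mono_left nhdsWithin_le_nhds
    have h0' : (Real.exp 1 * 0 * r / (N:ℝ)) ^ N = 0 := by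
      simp [zero_pow hN.ne']
    rw [h0'] at htend
    have hb := ge_of_tendsto htend (eventually_nhdsWithin_of_forall key)
    simpa [zero_pow hN.ne'] using hb
  · exact exp_sum_small_ball_pos P N hN r hr Y hmeas hindep hdist t hpos
end

section
/- Let Y_1, …, Y_N be independent and identically distributed exponential random variables with rate parameter 1. Then for every real t ≥ 1, P(Σ_{j=1}^N Y_j ≥ t·N) ≤ (1/t)·exp(−N·(t − 1 − log t)). -/
open MeasureTheory ProbabilityTheory
open Real Set
open scoped ENNReal NNReal

noncomputable def Gtail (n : ℕ) (x : ℝ) : ℝ :=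
  Real.exp (-x) * ∑ k ∈ Finset.range n, x ^ k / (Nat.factorial k)

lemma expMeasure_Ici (x : ℝ) :
    expMeasure 1 (Set.Ici x) = if 0 < x then ENNReal.ofReal (Real.exp (-x)) else 1 := by
  haveI : IsProbabilityMeasure (expMeasure 1) := isProbabilityMeasure_expMeasure one_pos
  have hIio : expMeasure 1 (Set.Iio x) = ENNReal.ofReal (if 0 ≤ x then 1 - Real.exp (-(1*x)) else 0) := by
    rw [expMeasure, gammaMeasure, withDensity_apply _ measurableSet_Iio]
    have : ∫⁻ y in Set.Iio x, gammaPDF 1 1 y = ∫⁻ y in Set.Iic x, exponentialPDF 1 y := by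
      refine setLIntegral_congr Iio_ae_eq_Iic
    rw [this, lintegral_exponentialPDF_eq_antiDeriv one_pos]
  have hcompl : expMeasure 1 (Set.Ici x) = 1 - expMeasure 1 (Set.Iio x) := by
    rw [← prob_compl_eq_one_sub measurableSet_Iio, compl_Iio]
  rw [hcompl, hIio]
  split_ifs with h h2 h3
  · rw [one_mul, ← ENNReal.ofReal_one, ← ENNReal.ofReal_sub _ (by simp [Real.exp_le_one_iff]; nlinarith)]
    congr 1
    ring
  · have hx0 : x = 0 := le_antisymm (not_lt.mp h2) h
    simp [hx0]
  · exact absurd h3.le h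
  · simp

lemma Gtail_cont (n : ℕ) (x : ℝ) : Continuous (fun y => Gtail n (x - y)) := by
  unfold Gtail
  fun_prop

lemma conv_step (n : ℕ) (ν : Measure ℝ) [IsProbabilityMeasure ν]
    (hν : ∀ u : ℝ, ν (Set.Ici u) = if 0 < u then ENNReal.ofReal (Gtail n u) else 1) (x : ℝ) :
    ∫⁻ y, ν (Set.Ici (x - y)) ∂(expMeasure 1)
      = if 0 < x then ENNReal.ofReal (Gtail (n + 1) x) else 1 := by
  haveI : IsProbabilityMeasure (expMeasure 1) := isProbabilityMeasure_expMeasure one_pos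
  have hf_eq : ∀ y : ℝ, ν (Set.Ici (x - y)) = if y < x then ENNReal.ofReal (Gtail n (x - y)) else 1 := by
    intro y
    rw [hν]
    simp [sub_pos]
  have hfmeas : Measurable fun y : ℝ => ν (Set.Ici (x - y)) := by
    simp_rw [hf_eq]
    exact Measurable.ite measurableSet_Iio (Gtail_cont n x).measurable.ennreal_ofReal measurable_const
  by_cases hx : 0 < x
  swap
  · rw [if_neg hx]
    push_neg at hx
    refine le_antisymm ?_ ?_
    · calc ∫⁻ y, ν (Set.Ici (x - y)) ∂(expMeasure 1) ≤ ∫⁻ _, 1 ∂(expMeasure 1) :=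
            lintegral_mono fun y => prob_le_one
        _ = 1 := by simp
    · have h1 : (1 : ℝ≥0∞) = ∫⁻ y in Set.Ici (0:ℝ), ν (Set.Ici (x - y)) ∂(expMeasure 1) := by
        rw [setLIntegral_congr_fun measurableSet_Ici
          (fun y (hy : (0:ℝ) ≤ y) => by
            rw [hf_eq y, if_neg (not_lt.mpr (hx.trans hy))])]
        rw [setLIntegral_one]
        rw [expMeasure_Ici]
        simp
      rw [h1]
      exact setLIntegral_le_lintegral _ _
  rw [if_pos hx]
  have hpdfmeas : Measurable (gammaPDF 1 1) := (measurable_gammaPDFReal 1 1).ennreal_ofReal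
  rw [show expMeasure 1 = volume.withDensity (gammaPDF 1 1) from rfl,
    lintegral_withDensity_eq_lintegral_mul _ hpdfmeas hfmeas]
  have hgexp : gammaPDF 1 1 = exponentialPDF 1 := rfl
  rw [hgexp]
  rw [← lintegral_add_compl (fun y => (exponentialPDF 1 * fun y => ν (Set.Ici (x - y))) y)
    (measurableSet_Ici (a := (0:ℝ)))]
  have hneg : ∫⁻ y in (Set.Ici (0:ℝ))ᶜ, (exponentialPDF 1 * fun y => ν (Set.Ici (x - y))) y = 0 := by
    rw [compl_Ici]
    rw [setLIntegral_congr_fun (g := fun _ => (0:ℝ≥0∞)) measurableSet_Iio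
      (fun y (hy : y < (0:ℝ)) => by
        rw [Pi.mul_apply, exponentialPDF_of_neg hy, zero_mul]), lintegral_zero]
  rw [hneg, add_zero]
  rw [← Set.Ico_union_Ici_eq_Ici hx.le,
    lintegral_union measurableSet_Ici (Set.disjoint_left.mpr fun y hy1 hy2 => absurd hy1.2 (not_lt.mpr hy2))]
  have hmid : ∫⁻ y in Set.Ico (0:ℝ) x, (exponentialPDF 1 * fun y => ν (Set.Ici (x - y))) y
      = ENNReal.ofReal (Real.exp (-x) * ∑ k ∈ Finset.range n, x ^ (k+1) / (Nat.factorial (k+1))) := by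
    have hcong : ∫⁻ y in Set.Ico (0:ℝ) x, (exponentialPDF 1 * fun y => ν (Set.Ici (x - y))) y
        = ∫⁻ y in Set.Ico (0:ℝ) x,
            ENNReal.ofReal (Real.exp (-x) * ∑ k ∈ Finset.range n, (x - y) ^ k / (Nat.factorial k)) := by
      refine setLIntegral_congr_fun measurableSet_Ico (fun y hy => ?_)
      obtain ⟨hy0, hyx⟩ := hy
      simp only [Pi.mul_apply]
      rw [exponentialPDF_of_nonneg hy0, hf_eq y, if_pos hyx,
        ← ENNReal.ofReal_mul (by positivity)]
      congr 1
      unfold Gtail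
      rw [one_mul, ← mul_assoc, ← Real.exp_add]
      have harg : -(1*y) + -(x - y) = -x := by ring
      rw [harg]
    rw [hcong]
    have hcont : Continuous (fun y : ℝ => Real.exp (-x) * ∑ k ∈ Finset.range n, (x - y) ^ k / (Nat.factorial k)) := by
      fun_prop
    have hint : IntegrableOn (fun y : ℝ => Real.exp (-x) * ∑ k ∈ Finset.range n, (x - y) ^ k / (Nat.factorial k)) (Set.Ico 0 x) :=
      (hcont.integrableOn_Icc).mono_set Set.Ico_subset_Icc_self
    rw [← ofReal_integral_eq_lintegral_ofReal hint
      ((ae_restrict_iff' measurableSet_Ico).mpr (ae_of_all _ (fun y hy => by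
        have h1 : (0:ℝ) ≤ x - y := by linarith [hy.2]
        exact mul_nonneg (Real.exp_nonneg _) (Finset.sum_nonneg fun k _ =>
          div_nonneg (pow_nonneg h1 k) (Nat.cast_nonneg _)))))]
    congr 1
    rw [MeasureTheory.integral_Ico_eq_integral_Ioo, ← MeasureTheory.integral_Ioc_eq_integral_Ioo,
      ← intervalIntegral.integral_of_le hx.le]
    rw [intervalIntegral.integral_const_mul]
    congr 1
    rw [intervalIntegral.integral_finset_sum (fun k _ =>
      (Continuous.intervalIntegrable
        (by fun_prop : Continuous fun y : ℝ => (x - y) ^ k / (Nat.factorial k : ℝ)) 0 x))]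
    refine Finset.sum_congr rfl fun k _ => ?_
    rw [intervalIntegral.integral_div]
    rw [intervalIntegral.integral_comp_sub_left (fun u => u ^ k) x]
    simp only [sub_self, sub_zero]
    rw [integral_pow]
    rw [Nat.factorial_succ]
    have hk : ((Nat.factorial k : ℝ)) ≠ 0 := Nat.cast_ne_zero.mpr k.factorial_ne_zero
    have hk1 : ((k:ℝ) + 1) ≠ 0 := by positivity
    push_cast
    field_simp
    simp
  have hright : ∫⁻ y in Set.Ici x, (exponentialPDF 1 * fun y => ν (Set.Ici (x - y))) y
      = ENNReal.ofReal (Real.exp (-x)) := by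
    have hcong : ∫⁻ y in Set.Ici x, (exponentialPDF 1 * fun y => ν (Set.Ici (x - y))) y
        = ∫⁻ y in Set.Ici x, ENNReal.ofReal (Real.exp (-y)) := by
      refine setLIntegral_congr_fun measurableSet_Ici (fun y (hy : x ≤ y) => ?_)
      simp only [Pi.mul_apply]
      rw [exponentialPDF_of_nonneg (hx.le.trans hy), hf_eq y, if_neg (not_lt.mpr hy)]
      simp
    rw [hcong, setLIntegral_congr (Ioi_ae_eq_Ici (a := x)).symm]
    have hint : IntegrableOn (fun y : ℝ => Real.exp (-y)) (Set.Ioi x) := by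
      simpa using exp_neg_integrableOn_Ioi x one_pos
    rw [← ofReal_integral_eq_lintegral_ofReal hint (ae_of_all _ (fun y => (Real.exp_pos _).le))]
    rw [integral_exp_neg_Ioi]
  rw [hmid, hright, ← ENNReal.ofReal_add (by positivity) (Real.exp_pos _).le]
  congr 1
  unfold Gtail
  rw [Finset.sum_range_succ']
  simp [Nat.factorial]
  ring

lemma tail_add {Ω : Type*} [MeasurableSpace Ω] (P : Measure Ω) [IsProbabilityMeasure P]
    (X Z : Ω → ℝ) (hX : Measurable X) (hZ : Measurable Z) (h : IndepFun X Z P) (x : ℝ) :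
    P {ω | x ≤ X ω + Z ω} = ∫⁻ y, (P.map Z) (Set.Ici (x - y)) ∂(P.map X) := by
  haveI : IsProbabilityMeasure (P.map Z) := Measure.isProbabilityMeasure_map hZ.aemeasurable
  haveI : IsProbabilityMeasure (P.map X) := Measure.isProbabilityMeasure_map hX.aemeasurable
  have hmap : P.map (fun ω => (X ω, Z ω)) = (P.map X).prod (P.map Z) :=
    (indepFun_iff_map_prod_eq_prod_map_map hX.aemeasurable hZ.aemeasurable).mp h
  have hs : MeasurableSet {p : ℝ × ℝ | x ≤ p.1 + p.2} :=
    measurableSet_le measurable_const (measurable_fst.add measurable_snd)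
  calc P {ω | x ≤ X ω + Z ω}
      = P.map (fun ω => (X ω, Z ω)) {p : ℝ × ℝ | x ≤ p.1 + p.2} := by
        rw [Measure.map_apply (hX.prodMk hZ) hs]; rfl
    _ = ((P.map X).prod (P.map Z)) {p : ℝ × ℝ | x ≤ p.1 + p.2} := by rw [hmap]
    _ = ∫⁻ y, (P.map Z) (Set.Ici (x - y)) ∂(P.map X) := by
        rw [Measure.prod_apply hs]
        refine lintegral_congr fun y => ?_
        congr 1
        ext z
        simp [Set.mem_Ici, sub_le_iff_le_add', add_comm]

lemma tail_formula {Ω : Type*} [MeasurableSpace Ω] (P : Measure Ω) [IsProbabilityMeasure P]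
    {ι : Type*} (Y : ι → Ω → ℝ)
    (hmeas : ∀ j, Measurable (Y j))
    (hindep : iIndepFun Y P)
    (hdist : ∀ j, P.map (Y j) = expMeasure 1)
    (s : Finset ι) (x : ℝ) :
    P {ω | x ≤ ∑ j ∈ s, Y j ω} = if 0 < x then ENNReal.ofReal (Gtail s.card x) else 1 := by
  induction s using Finset.cons_induction generalizing x with
  | empty =>
    simp only [Finset.sum_empty, Finset.card_empty]
    split_ifs with h
    · have : {ω : Ω | x ≤ (0:ℝ)} = (∅ : Set Ω) := by
        ext ω; simp; linarith
      rw [this]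
      simp [Gtail]
    · have : {ω : Ω | x ≤ (0:ℝ)} = (Set.univ : Set Ω) := by
        ext ω; simp; linarith
      rw [this]
      simp
  | cons i s hi ih =>
    have hS : Measurable (fun ω => ∑ j ∈ s, Y j ω) := by
      apply Finset.measurable_sum
      exact fun j _ => hmeas j
    haveI : IsProbabilityMeasure (P.map (fun ω => ∑ j ∈ s, Y j ω)) :=
      Measure.isProbabilityMeasure_map hS.aemeasurable
    have hindepXZ : IndepFun (Y i) (fun ω => ∑ j ∈ s, Y j ω) P := by
      have h2 : (fun ω => ∑ j ∈ s, Y j ω) = ∑ j ∈ s, Y j := by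
        ext ω; simp
      rw [h2]
      exact (hindep.indepFun_finsetSum_of_notMem hmeas hi).symm
    have hset : {ω : Ω | x ≤ ∑ j ∈ Finset.cons i s hi, Y j ω}
        = {ω : Ω | x ≤ Y i ω + ∑ j ∈ s, Y j ω} := by
      ext ω; simp [Finset.sum_cons]
    rw [hset, tail_add P (Y i) (fun ω => ∑ j ∈ s, Y j ω) (hmeas i) hS hindepXZ, hdist i]
    have hν : ∀ u : ℝ, (P.map (fun ω => ∑ j ∈ s, Y j ω)) (Set.Ici u)
        = if 0 < u then ENNReal.ofReal (Gtail s.card u) else 1 := by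
      intro u
      rw [Measure.map_apply hS measurableSet_Ici]
      exact ih u
    rw [conv_step s.card _ hν x, Finset.card_cons]


/-- **Upper-tail bound for sums of i.i.d. rate-one exponentials**: if `Y₁, …, Y_N` are
i.i.d. exponential random variables with rate `1`, then for every real `t ≥ 1`,
`P(∑ Yⱼ ≥ t N) ≤ (1/t) exp(−N (t − 1 − log t))`. -/
theorem exp_sum_upper_tail
    {Ω : Type*} [MeasurableSpace Ω] (P : Measure Ω) [IsProbabilityMeasure P]
    (N : ℕ) (hN : 0 < N)
    (Y : Fin N → Ω → ℝ)
    (hmeas : ∀ j, Measurable (Y j))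
    (hindep : iIndepFun Y P)
    (hdist : ∀ j, P.map (Y j) = expMeasure 1)
    (t : ℝ) (ht : 1 ≤ t) :
    (P {ω | t * N ≤ ∑ j, Y j ω}).toReal ≤
      (1 / t) * Real.exp (-(N : ℝ) * (t - 1 - Real.log t)) := by
  have ht0 : (0:ℝ) < t := lt_of_lt_of_le one_pos ht
  have hN1 : (1:ℝ) ≤ (N:ℝ) := by exact_mod_cast hN
  have hx : (0:ℝ) < t * N := by nlinarith
  have htail := tail_formula P Y hmeas hindep hdist Finset.univ (t * N)
  rw [if_pos hx, Finset.card_univ, Fintype.card_fin] at htail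
  have hGnonneg : 0 ≤ Gtail N (t * N) := by
    unfold Gtail
    refine mul_nonneg (Real.exp_nonneg _) (Finset.sum_nonneg fun k _ => ?_)
    positivity
  calc (P {ω | t * N ≤ ∑ j, Y j ω}).toReal
      = Gtail N (t * N) := by rw [htail, ENNReal.toReal_ofReal hGnonneg]
    _ ≤ Real.exp (-(t * N)) * (t ^ (N - 1) * Real.exp N) := by
        unfold Gtail
        refine mul_le_mul_of_nonneg_left ?_ (Real.exp_nonneg _)
        calc ∑ k ∈ Finset.range N, (t * N) ^ k / (Nat.factorial k : ℝ)
            ≤ ∑ k ∈ Finset.range N, t ^ (N - 1) * ((N:ℝ) ^ k / (Nat.factorial k : ℝ)) := by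
              refine Finset.sum_le_sum fun k hk => ?_
              rw [mul_pow, mul_div_assoc]
              refine mul_le_mul_of_nonneg_right ?_ (by positivity)
              exact pow_le_pow_right₀ ht (Nat.le_pred_of_lt (Finset.mem_range.mp hk))
          _ = t ^ (N - 1) * ∑ k ∈ Finset.range N, ((N:ℝ) ^ k / (Nat.factorial k : ℝ)) :=
              (Finset.mul_sum _ _ _).symm
          _ ≤ t ^ (N - 1) * Real.exp N :=
              mul_le_mul_of_nonneg_left (Real.sum_le_exp_of_nonneg (Nat.cast_nonneg N) N)
                (by positivity)
    _ = (1 / t) * Real.exp (-(N : ℝ) * (t - 1 - Real.log t)) := by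
        have h1t : (1:ℝ)/t = Real.exp (-Real.log t) := by
          rw [Real.exp_neg, Real.exp_log ht0, one_div]
        have hpow : t ^ (N - 1) = Real.exp (((N : ℝ) - 1) * Real.log t) := by
          refine Eq.symm ?_
          rw [show ((N:ℝ) - 1) = ((N - 1 : ℕ) : ℝ) from by push_cast [Nat.cast_sub hN]; ring,
            Real.exp_nat_mul, Real.exp_log ht0]
        rw [h1t, hpow, ← Real.exp_add, ← Real.exp_add, ← Real.exp_add]
        congr 1
        ring
end

section
/- Let G have minimum degree δ and maximum degree Δ. For every vertex v ∈ V, every integer m ≥ 1, and every real K with 0 < K ≤ δ/(10Δ), the probability that there exists a directed path γ within V (not using the source v_s) starting at v, having at least m edges, and satisfying T(γ) ≤ K·m is at most (e/10)/(1 − e/10). -/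
open MeasureTheory ProbabilityTheory SimpleGraph
open scoped Classical ENNReal

noncomputable section

/-- The passage time of a walk in the auxiliary graph, using only internal (within-`V`)
directed edges, which are indexed by darts of `G`. -/
def walkTime {V : Type*} {G : SimpleGraph V} {Ω : Type*}
    (τ : G.Dart ⊕ V → Ω → ℝ) (ω : Ω) {u w : V} (p : G.Walk u w) : ℝ :=
  (p.darts.map fun d => τ (Sum.inl d) ω).sum

/-- The first passage time `T(v, v_s)` from `v` to the adjoined source `v_s`: the minimum,
over directed paths `γ` from `v` to the source (a simple path inside `G` from `v` to some
vertex `u`, followed by the directed edge `(u, v_s)`), of the sum of the edge weights. -/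
def srcTime {V : Type*} {G : SimpleGraph V} {Ω : Type*}
    (τ : G.Dart ⊕ V → Ω → ℝ) (v : V) (ω : Ω) : ℝ :=
  ⨅ p : (Σ u : V, {q : G.Walk v u // q.IsPath}),
    walkTime τ ω p.2.1 + τ (Sum.inr p.1) ω

/-- The ball of radius `m` about `v` in the graph distance. -/
def gball {V : Type*} [Fintype V] (G : SimpleGraph V) (v : V) (m : ℕ) : Finset V :=
  Finset.univ.filter fun u => G.dist v u ≤ m

/-- `m*(v) = min { m ≥ 1 : m ⬝ |B_m(v)| ≥ n }`. -/
def mStar {V : Type*} [Fintype V] (G : SimpleGraph V) (v : V) : ℕ :=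
  sInf {m : ℕ | 1 ≤ m ∧ Fintype.card V ≤ m * (gball G v m).card}

section Helpers
open Real Set
lemma expPDFReal_eq (r x : ℝ) :
    exponentialPDFReal r x = if 0 ≤ x then r * exp (-(r * x)) else 0 := by
  rw [exponentialPDFReal, gammaPDFReal]
  simp only [rpow_one, Gamma_one, div_one, sub_self, rpow_zero, mul_one]

lemma expMeasure_eq_withDensity (r : ℝ) :
    expMeasure r = MeasureTheory.volume.withDensity
      (fun x => ((exponentialPDFReal r x).toNNReal : ENNReal)) := rfl

lemma integral_exp_mul_expMeasure {r t : ℝ} (hr : 0 < r) (ht : t ≤ 0) :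
    ∫ x, exp (t * x) ∂(expMeasure r) = r / (r - t) := by
  have hb : 0 < r - t := by linarith
  rw [expMeasure_eq_withDensity,
    integral_withDensity_eq_integral_smul
      ((measurable_exponentialPDFReal r).real_toNNReal) _]
  have : ∀ x : ℝ, (exponentialPDFReal r x).toNNReal • exp (t * x)
      = Set.indicator (Ici (0:ℝ)) (fun x => r * exp (-((r - t) * x))) x := by
    intro x
    rw [NNReal.smul_def, Real.coe_toNNReal _ (exponentialPDFReal_nonneg hr x),
      expPDFReal_eq]
    by_cases hx : 0 ≤ x
    · rw [if_pos hx, Set.indicator_of_mem (Set.mem_Ici.mpr hx), smul_eq_mul,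
        mul_assoc, ← Real.exp_add]
      ring_nf
    · rw [if_neg hx, Set.indicator_of_notMem (by simpa using hx), smul_eq_mul, zero_mul]
  rw [MeasureTheory.integral_congr_ae (Filter.Eventually.of_forall this),
    integral_indicator measurableSet_Ici, integral_Ici_eq_integral_Ioi,
    MeasureTheory.integral_const_mul]
  have := integral_comp_mul_left_Ioi (fun x => exp (-x)) 0 hb
  simp only [mul_zero, neg_zero, integral_exp_neg_Ioi, Real.exp_zero, smul_eq_mul,
    mul_one] at this
  rw [this]
  field_simp

variable {Ω : Type*} [MeasurableSpace Ω] {P : Measure Ω}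

lemma mgf_of_map_expMeasure {X : Ω → ℝ} (hX : Measurable X) {r t : ℝ}
    (hr : 0 < r) (ht : t ≤ 0) (hmap : P.map X = expMeasure r) :
    mgf X P t = r / (r - t) := by
  rw [← integral_exp_mul_expMeasure hr ht, ← hmap, mgf,
    integral_map hX.aemeasurable]
  exact (Real.continuous_exp.comp (continuous_const.mul continuous_id)).aestronglyMeasurable

lemma expMeasure_Iio_zero {r : ℝ} : expMeasure r (Set.Iio 0) = 0 := by
  rw [expMeasure_eq_withDensity, withDensity_apply _ measurableSet_Iio]
  have : ∀ x ∈ Set.Iio (0:ℝ), ((exponentialPDFReal r x).toNNReal : ENNReal) = 0 := by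
    intro x hx
    simp [expPDFReal_eq, not_le.mpr (Set.mem_Iio.mp hx)]
  rw [setLIntegral_congr_fun measurableSet_Iio this]
  simp

lemma ae_nonneg_of_map_expMeasure {X : Ω → ℝ} (hX : Measurable X) {r : ℝ}
    (hmap : P.map X = expMeasure r) : ∀ᵐ ω ∂P, 0 ≤ X ω := by
  have : P (X ⁻¹' Set.Iio 0) = 0 := by
    rw [← Measure.map_apply hX measurableSet_Iio, hmap, expMeasure_Iio_zero]
  filter_upwards [MeasureTheory.measure_eq_zero_iff_ae_notMem.mp this] with ω hω
  simpa using hω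

open SimpleGraph in
lemma count_walks_le {V : Type*} [Fintype V] [DecidableEq V] (G : SimpleGraph V)
    [DecidableRel G.Adj] :
    ∀ (k : ℕ) (v : V), ∑ u : V, (G.finsetWalkLength k v u).card ≤ G.maxDegree ^ k := by
  intro k
  induction k with
  | zero =>
    intro v
    have h0 : ∀ u, (G.finsetWalkLength 0 v u).card = if v = u then 1 else 0 := by
      intro u
      show (if h : v = u then _ else ∅ : Finset (G.Walk v u)).card = _
      split_ifs with h
      · subst h; rfl
      · rfl
    simp [h0]
  | succ k ih =>
    intro v
    have step : ∀ u, (G.finsetWalkLength (k+1) v u).card ≤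
        ∑ w : G.neighborSet v, (G.finsetWalkLength k w u).card := by
      intro u
      have hdef : G.finsetWalkLength (k+1) v u =
          Finset.univ.biUnion fun (w : G.neighborSet v) =>
            (G.finsetWalkLength k w u).map
              ⟨fun p => SimpleGraph.Walk.cons w.property p, fun _ _ h => by cases h; rfl⟩ := rfl
      rw [hdef]
      refine (Finset.card_biUnion_le).trans ?_
      simp [Finset.card_map]
    calc ∑ u : V, (G.finsetWalkLength (k+1) v u).card
        ≤ ∑ u : V, ∑ w : G.neighborSet v, (G.finsetWalkLength k w u).card :=
          Finset.sum_le_sum fun u _ => step u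
      _ = ∑ w : G.neighborSet v, ∑ u : V, (G.finsetWalkLength k w u).card :=
          Finset.sum_comm
      _ ≤ ∑ _w : G.neighborSet v, G.maxDegree ^ k :=
          Finset.sum_le_sum fun w _ => ih w
      _ = G.degree v * G.maxDegree ^ k := by
          rw [Finset.sum_const, smul_eq_mul, ← G.card_neighborSet_eq_degree]
          rfl
      _ ≤ G.maxDegree ^ (k+1) := by
          rw [pow_succ, mul_comm]
          exact Nat.mul_le_mul_left _ (G.degree_le_maxDegree v)

open SimpleGraph in
lemma chernoff_path {V : Type*} [Fintype V] [DecidableEq V] {G : SimpleGraph V}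
    [DecidableRel G.Adj]
    {Ω : Type*} [MeasurableSpace Ω] {P : Measure Ω} [IsProbabilityMeasure P]
    {τ : G.Dart ⊕ V → Ω → ℝ}
    (hmeas : ∀ e, Measurable (τ e))
    (hindep : iIndepFun τ P)
    (hdist_edge : ∀ d : G.Dart,
      P.map (τ (Sum.inl d)) = expMeasure (1 / (G.degree d.snd : ℝ)))
    {K : ℝ} (hK0 : 0 < K) (hδ : 0 < G.minDegree)
    {u w : V} (p : G.Walk u w) (hp : p.IsPath) (m : ℕ) :
    (P {ω | walkTime τ ω p ≤ K * m}).toReal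
      ≤ Real.exp m * (K / (G.minDegree : ℝ)) ^ p.length := by
  classical
  set t : ℝ := -K⁻¹ with ht_def
  have ht : t ≤ 0 := by simp [ht_def]; positivity
  set s : Finset (G.Dart ⊕ V) := (p.darts.map Sum.inl).toFinset with hs_def
  have hnd : p.darts.Nodup := p.darts_nodup_of_support_nodup hp.support_nodup
  have hnd' : (p.darts.map (Sum.inl : G.Dart → G.Dart ⊕ V)).Nodup := hnd.map Sum.inl_injective
  have hmem : ∀ e ∈ s, ∃ d ∈ p.darts, e = Sum.inl d := by
    intro e he
    rw [hs_def, List.mem_toFinset, List.mem_map] at he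
    obtain ⟨d, hd, rfl⟩ := he
    exact ⟨d, hd, rfl⟩
  have hsum : ∀ ω, walkTime τ ω p = (∑ e ∈ s, τ e) ω := by
    intro ω
    rw [Finset.sum_apply, hs_def, List.sum_toFinset _ hnd', List.map_map]
    rfl
  have hXmeas : Measurable (∑ e ∈ s, τ e) := by
    have hfn : (∑ e ∈ s, τ e) = fun ω => ∑ e ∈ s, τ e ω := by
      ext ω; simp [Finset.sum_apply]
    rw [hfn]
    exact Finset.measurable_sum s fun e _ => hmeas e
  have hae : ∀ᵐ ω ∂P, ∀ e ∈ (s : Set (G.Dart ⊕ V)), 0 ≤ τ e ω := by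
    rw [MeasureTheory.ae_ball_iff s.countable_toSet]
    intro e he
    obtain ⟨d, _, rfl⟩ := hmem e (Finset.mem_coe.mp he)
    exact ae_nonneg_of_map_expMeasure (hmeas _) (hdist_edge d)
  have h_int : Integrable (fun ω => Real.exp (t * (∑ e ∈ s, τ e) ω)) P := by
    refine Integrable.mono' (integrable_const 1)
      ((hXmeas.const_mul t).exp.aestronglyMeasurable) ?_
    filter_upwards [hae] with ω hω
    have hX0 : 0 ≤ (∑ e ∈ s, τ e) ω := by
      rw [Finset.sum_apply]
      exact Finset.sum_nonneg fun e he => hω e (Finset.mem_coe.mpr he)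
    have : t * (∑ e ∈ s, τ e) ω ≤ 0 := mul_nonpos_of_nonpos_of_nonneg ht hX0
    simpa [Real.norm_eq_abs, abs_of_pos (Real.exp_pos _)] using Real.exp_le_one_iff.mpr this
  have hch := measure_le_le_exp_mul_mgf (μ := P) (X := ∑ e ∈ s, τ e) (K * m) ht h_int
  have hev : {ω | walkTime τ ω p ≤ K * m} = {ω | (∑ e ∈ s, τ e) ω ≤ K * m} := by
    ext ω; rw [Set.mem_setOf_eq, Set.mem_setOf_eq, hsum ω]
  rw [hev]
  refine hch.trans ?_
  rw [hindep.mgf_sum hmeas s]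
  have hδR : (0:ℝ) < (G.minDegree : ℝ) := by exact_mod_cast hδ
  have hexp : Real.exp (-t * (K * m)) = Real.exp m := by
    rw [ht_def]
    congr 1
    field_simp
  have hfac : ∀ e ∈ s, mgf (τ e) P t ≤ K / (G.minDegree : ℝ) := by
    intro e he
    obtain ⟨d, _, rfl⟩ := hmem e he
    have hdeg : 0 < G.degree d.snd := by
      rw [G.degree_pos_iff_exists_adj]
      exact ⟨d.fst, d.adj.symm⟩
    have hμ : (0:ℝ) < (G.degree d.snd : ℝ) := by exact_mod_cast hdeg
    have hr : (0:ℝ) < 1 / (G.degree d.snd : ℝ) := by positivity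
    rw [mgf_of_map_expMeasure (hmeas _) hr ht (hdist_edge d)]
    have h1 : 1 / (G.degree d.snd : ℝ) / (1 / (G.degree d.snd : ℝ) - t)
        ≤ 1 / (G.degree d.snd : ℝ) / K⁻¹ := by
      apply div_le_div_of_nonneg_left hr.le (by positivity) ?_
      rw [ht_def]
      linarith
    refine h1.trans ?_
    rw [div_inv_eq_mul, one_div_mul_eq_div]
    have hδμ : (G.minDegree : ℝ) ≤ (G.degree d.snd : ℝ) := by
      exact_mod_cast G.minDegree_le_degree d.snd
    exact div_le_div_of_nonneg_left hK0.le hδR hδμ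
  have hcard : s.card = p.length := by
    rw [hs_def, List.toFinset_card_of_nodup hnd', List.length_map,
      SimpleGraph.Walk.length_darts]
  have hprod : ∏ e ∈ s, mgf (τ e) P t ≤ (K / (G.minDegree : ℝ)) ^ p.length := by
    calc ∏ e ∈ s, mgf (τ e) P t ≤ ∏ _e ∈ s, (K / (G.minDegree : ℝ)) :=
          Finset.prod_le_prod (fun e _ => mgf_nonneg) hfac
      _ = (K / (G.minDegree : ℝ)) ^ p.length := by rw [Finset.prod_const, hcard]
  rw [hexp]
  exact mul_le_mul_of_nonneg_left hprod (Real.exp_pos _).le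

end Helpers

/-- **No short paths** (key step in the lower bound of Theorem 1.1): if `G` has minimum
degree `δ` and maximum degree `Δ`, then for every vertex `v`, every `m ≥ 1` and every
`K` with `0 < K ≤ δ/(10Δ)`, the probability that some directed path inside `V` starting
at `v` with at least `m` edges has passage time at most `K m` is at most
`(e/10)/(1 − e/10)`. -/
theorem no_short_path_bound
    {V : Type*} [Fintype V] [DecidableEq V] (G : SimpleGraph V) [DecidableRel G.Adj]
    (hG : G.Connected)
    {Ω : Type*} [MeasurableSpace Ω] (P : Measure Ω) [IsProbabilityMeasure P]
    (τ : G.Dart ⊕ V → Ω → ℝ)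
    (hmeas : ∀ e, Measurable (τ e))
    (hindep : iIndepFun τ P)
    (hdist_edge : ∀ d : G.Dart,
      P.map (τ (Sum.inl d)) = expMeasure (1 / (G.degree d.snd : ℝ)))
    (hdist_src : ∀ u : V,
      P.map (τ (Sum.inr u)) = expMeasure (1 / (Fintype.card V : ℝ)))
    (v : V) (m : ℕ) (hm : 1 ≤ m)
    (K : ℝ) (hK0 : 0 < K) (hK : K ≤ (G.minDegree : ℝ) / (10 * (G.maxDegree : ℝ))) :
    (P {ω | ∃ (u : V) (p : G.Walk v u), p.IsPath ∧ m ≤ p.length ∧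
        walkTime τ ω p ≤ K * m}).toReal ≤
      (Real.exp 1 / 10) / (1 - Real.exp 1 / 10) := by
  classical
  have hΔ1 : 1 ≤ G.maxDegree := by
    by_contra h
    push_neg at h
    have h0 : G.maxDegree = 0 := by omega
    rw [h0] at hK
    norm_num at hK
    linarith
  have hδ1 : 1 ≤ G.minDegree := by
    by_contra h
    push_neg at h
    have h0 : G.minDegree = 0 := by omega
    rw [h0] at hK
    norm_num at hK
    linarith
  have hδR : (0:ℝ) < (G.minDegree : ℝ) := by exact_mod_cast hδ1
  have hΔR : (0:ℝ) < (G.maxDegree : ℝ) := by exact_mod_cast hΔ1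
  have hK' : K * (10 * (G.maxDegree : ℝ)) ≤ (G.minDegree : ℝ) := by
    rw [← le_div_iff₀ (by positivity)]
    exact hK
  have hgeo : (G.maxDegree : ℝ) * (K / (G.minDegree : ℝ)) ≤ 1/10 := by
    rw [mul_div_assoc', div_le_div_iff₀ hδR (by norm_num : (0:ℝ) < 10)]
    nlinarith
  set n := Fintype.card V with hn
  -- per-k bound
  have hk : ∀ k : ℕ, P (⋃ u ∈ (Finset.univ : Finset V),
      ⋃ q ∈ (G.finsetWalkLength k v u).filter (fun q => q.IsPath),
        {ω | walkTime τ ω q ≤ K * m})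
      ≤ ENNReal.ofReal (Real.exp m * (1/10 : ℝ)^k) := by
    intro k
    refine (measure_biUnion_finset_le _ _).trans ?_
    have hu : ∀ u : V, P (⋃ q ∈ (G.finsetWalkLength k v u).filter (fun q => q.IsPath),
        {ω | walkTime τ ω q ≤ K * m})
        ≤ (((G.finsetWalkLength k v u).filter (fun q => q.IsPath)).card : ℝ≥0∞) *
          ENNReal.ofReal (Real.exp m * (K / (G.minDegree : ℝ))^k) := by
      intro u
      refine (measure_biUnion_finset_le _ _).trans ?_
      rw [← nsmul_eq_mul]
      refine Finset.sum_le_card_nsmul _ _ _ ?_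
      intro q hq
      rw [Finset.mem_filter] at hq
      have hlen : q.length = k := mem_finsetWalkLength_iff.mp hq.1
      have hch := chernoff_path hmeas hindep hdist_edge hK0 hδ1 q hq.2 m
      rw [hlen] at hch
      calc P {ω | walkTime τ ω q ≤ K * m}
          = ENNReal.ofReal ((P {ω | walkTime τ ω q ≤ K * m}).toReal) :=
            (ENNReal.ofReal_toReal (measure_ne_top _ _)).symm
        _ ≤ _ := ENNReal.ofReal_le_ofReal hch
    refine (Finset.sum_le_sum fun u _ => hu u).trans ?_
    rw [← Finset.sum_mul]
    have hcount : ∑ u : V, (((G.finsetWalkLength k v u).filter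
        (fun q => q.IsPath)).card : ℝ≥0∞) ≤ ((G.maxDegree ^ k : ℕ) : ℝ≥0∞) := by
      rw [← Nat.cast_sum]
      exact_mod_cast Nat.cast_le.mpr ((Finset.sum_le_sum fun u _ =>
        Finset.card_filter_le _ _).trans (count_walks_le G k v))
    refine (mul_le_mul_left hcount _).trans ?_
    rw [← ENNReal.ofReal_natCast, ← ENNReal.ofReal_mul (by positivity)]
    apply ENNReal.ofReal_le_ofReal
    push_cast
    calc ((G.maxDegree : ℝ))^k * (Real.exp m * (K / (G.minDegree : ℝ))^k)
        = Real.exp m * ((G.maxDegree : ℝ) * (K / (G.minDegree : ℝ)))^k := by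
          rw [mul_pow]; ring
      _ ≤ Real.exp m * (1/10 : ℝ)^k := by
          apply mul_le_mul_of_nonneg_left (pow_le_pow_left₀ (by positivity) hgeo k)
            (Real.exp_pos _).le
  -- inclusion
  have hsub : {ω | ∃ (u : V) (p : G.Walk v u), p.IsPath ∧ m ≤ p.length ∧
      walkTime τ ω p ≤ K * m} ⊆
      ⋃ k ∈ Finset.Ico m n, ⋃ u ∈ (Finset.univ : Finset V),
        ⋃ q ∈ (G.finsetWalkLength k v u).filter (fun q => q.IsPath),
          {ω | walkTime τ ω q ≤ K * m} := by
    intro ω hω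
    obtain ⟨u, p, hp, hlen, hT⟩ := hω
    simp only [Set.mem_iUnion, Set.mem_setOf_eq]
    refine ⟨p.length, Finset.mem_Ico.mpr ⟨hlen, hp.length_lt⟩, u, Finset.mem_univ u,
      p, Finset.mem_filter.mpr ⟨mem_finsetWalkLength_iff.mpr rfl, hp⟩, hT⟩
  -- assemble
  have hPE : P {ω | ∃ (u : V) (p : G.Walk v u), p.IsPath ∧ m ≤ p.length ∧
      walkTime τ ω p ≤ K * m}
      ≤ ENNReal.ofReal (∑ k ∈ Finset.Ico m n, Real.exp m * (1/10 : ℝ)^k) := by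
    refine (measure_mono hsub).trans ?_
    refine (measure_biUnion_finset_le _ _).trans ?_
    rw [ENNReal.ofReal_sum_of_nonneg (fun k _ => by positivity)]
    exact Finset.sum_le_sum fun k _ => hk k
  -- real inequality
  have he10 : Real.exp 1 < 10 := by
    have := Real.exp_one_lt_d9
    linarith
  have he1 : (1:ℝ) ≤ Real.exp 1 := by
    have := Real.add_one_le_exp (1:ℝ)
    linarith
  have hreal : ∑ k ∈ Finset.Ico m n, Real.exp m * (1/10 : ℝ)^k ≤
      (Real.exp 1 / 10) / (1 - Real.exp 1 / 10) := by
    have hsum10 : ∑ k ∈ Finset.Ico m n, (1/10 : ℝ)^k ≤ (1/10 : ℝ)^m * (1 - 1/10 : ℝ)⁻¹ := by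
      rw [Finset.sum_Ico_eq_sum_range]
      have : ∀ i, (1/10 : ℝ)^(m+i) = (1/10:ℝ)^m * (1/10:ℝ)^i := fun i => pow_add _ _ _
      rw [Finset.sum_congr rfl fun i _ => this i, ← Finset.mul_sum]
      refine mul_le_mul_of_nonneg_left ?_ (by positivity)
      refine (Summable.sum_le_tsum (L := SummationFilter.unconditional ℕ) _ (fun i _ => by positivity) ?_).trans ?_
      · exact summable_geometric_of_lt_one (by norm_num) (by norm_num)
      · rw [tsum_geometric_of_lt_one (by norm_num) (by norm_num)]
    calc ∑ k ∈ Finset.Ico m n, Real.exp m * (1/10 : ℝ)^k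
        = Real.exp m * ∑ k ∈ Finset.Ico m n, (1/10 : ℝ)^k := by rw [Finset.mul_sum]
      _ ≤ Real.exp m * ((1/10 : ℝ)^m * (1 - 1/10 : ℝ)⁻¹) :=
          mul_le_mul_of_nonneg_left hsum10 (Real.exp_pos _).le
      _ = (Real.exp 1 / 10)^m * (10/9 : ℝ) := by
          rw [← Real.exp_one_pow, div_pow]
          have h10 : ((10:ℝ))^m ≠ 0 := by positivity
          field_simp
          have h10' : (10:ℝ)^m * (Real.exp 1 ^ m / 10^m) = Real.exp 1 ^ m := by field_simp
          rw [div_pow, one_pow]; linear_combination (-9) * h10'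
      _ ≤ (Real.exp 1 / 10) * (10/9 : ℝ) := by
          refine mul_le_mul_of_nonneg_right ?_ (by norm_num)
          have : (Real.exp 1 / 10)^m ≤ (Real.exp 1 / 10)^1 :=
            pow_le_pow_of_le_one (by positivity) (by linarith [he10]) hm
          simpa using this
      _ ≤ (Real.exp 1 / 10) / (1 - Real.exp 1 / 10) := by
          have h910 : (Real.exp 1/10) * (10/9:ℝ) = (Real.exp 1/10)/(9/10) := by ring
          rw [h910]
          exact div_le_div_of_nonneg_left (by positivity) (by linarith) (by linarith)
  refine ENNReal.toReal_le_of_le_ofReal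
    (div_nonneg (by positivity) (by linarith)) ?_
  exact hPE.trans (ENNReal.ofReal_le_ofReal hreal)


end
end
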